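/- With σ̄_u as above, Σ_{u ∈ (Z_4)^n} σ̄_u³ = 2^{2n+1} Σ_{j,k,h} β_{jkh}, where the triple sum is over all ordered triples of elements of S̄ and β_{jkh} = α(g_j+g_k+g_h) + α(g_j+g_k-g_h) + α(g_j-g_k+g_h) + α(g_j-g_k-g_h). -/

import Mathlib

open Complex Finset

noncomputable def ipow (a : ZMod 4) : ℂ := Complex.I ^ a.val

def isOddZ4 (a : ZMod 4) : Prop := a = 1 ∨ a = 3

instance : DecidablePred isOddZ4 := fun a => by unfold isOddZ4; infer_instance

/-- `g` has an odd entry and its first (lowest-index) odd entry equals 1. -/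
def inOmega {n : ℕ} (g : Fin n → ZMod 4) : Prop :=
  ∃ i : Fin n, g i = 1 ∧ ∀ j : Fin n, j < i → ¬ isOddZ4 (g j)

instance {n : ℕ} : DecidablePred (inOmega (n := n)) := fun g => by
  unfold inOmega; infer_instance

def allEven {n : ℕ} (u : Fin n → ZMod 4) : Prop := ∀ i, u i = 0 ∨ u i = 2

instance {n : ℕ} : DecidablePred (allEven (n := n)) := fun u => by
  unfold allEven; infer_instance

def dot4 {n : ℕ} (u w : Fin n → ZMod 4) : ZMod 4 := ∑ i, u i * w i

def alpha4 {n : ℕ} (g : Fin n → ZMod 4) : ℕ := if g = 0 then 1 else 0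

def beta4 {n : ℕ} (a b c : Fin n → ZMod 4) : ℕ :=
  alpha4 (a + b + c) + alpha4 (a + b - c) + alpha4 (a - b + c) + alpha4 (a - b - c)

lemma I_pow_mod (m : ℕ) : Complex.I ^ (m % 4) = Complex.I ^ m := by
  conv_rhs => rw [← Nat.div_add_mod m 4]
  rw [pow_add, pow_mul]
  norm_num [Complex.I_pow_four]

lemma ipow_zero : ipow 0 = 1 := by simp [ipow]

lemma ipow_one' : ipow 1 = Complex.I := by
  have : ((1:ZMod 4)).val = 1 := rfl
  simp [ipow, this]

lemma ipow_two' : ipow 2 = -1 := by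
  have : ((2:ZMod 4)).val = 2 := rfl
  simp [ipow, this, sq, Complex.I_mul_I]

lemma ipow_three' : ipow 3 = -Complex.I := by
  have : ((3:ZMod 4)).val = 3 := rfl
  simp [ipow, this, pow_succ, sq, Complex.I_mul_I]

lemma ipow_add (a b : ZMod 4) : ipow (a + b) = ipow a * ipow b := by
  unfold ipow
  rw [← pow_add, ZMod.val_add, I_pow_mod]

lemma ipow_sum {ι : Type*} (s : Finset ι) (f : ι → ZMod 4) :
    ipow (∑ i ∈ s, f i) = ∏ i ∈ s, ipow (f i) := by
  classical
  induction s using Finset.induction with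
  | empty => simp [ipow_zero]
  | insert _ _ h ih => rw [Finset.sum_insert h, Finset.prod_insert h, ipow_add, ih]

lemma sumZ4 (f : ZMod 4 → ℂ) : ∑ a : ZMod 4, f a = f 0 + f 1 + f 2 + f 3 := by
  rw [show (Finset.univ : Finset (ZMod 4)) = {0, 1, 2, 3} from by decide,
    Finset.sum_insert (by decide), Finset.sum_insert (by decide),
    Finset.sum_insert (by decide), Finset.sum_singleton]
  ring

lemma innerSumZ4 (c : ZMod 4) : ∑ a : ZMod 4, ipow (a * c) = if c = 0 then 4 else 0 := by
  have hc : c = 0 ∨ c = 1 ∨ c = 2 ∨ c = 3 := by revert c; decide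
  rcases hc with h | h | h | h <;> subst h <;> rw [sumZ4]
  · simp only [show ∀ x : ZMod 4, x*(0:ZMod 4) = 0 from fun x => by ring, ipow_zero]
    norm_num
  · simp only [show (0:ZMod 4)*1 = 0 from by decide,
      show (1:ZMod 4)*1 = 1 from by decide, show (2:ZMod 4)*1 = 2 from by decide,
      show (3:ZMod 4)*1 = 3 from by decide,
      ipow_zero, ipow_one', ipow_two', ipow_three']
    rw [if_neg (by decide)]; ring
  · simp only [show (0:ZMod 4)*2 = 0 from by decide,
      show (1:ZMod 4)*2 = 2 from by decide, show (2:ZMod 4)*2 = 0 from by decide,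
      show (3:ZMod 4)*2 = 2 from by decide,
      ipow_zero, ipow_one', ipow_two', ipow_three']
    rw [if_neg (by decide)]; ring
  · simp only [show (0:ZMod 4)*3 = 0 from by decide,
      show (1:ZMod 4)*3 = 3 from by decide, show (2:ZMod 4)*3 = 2 from by decide,
      show (3:ZMod 4)*3 = 1 from by decide,
      ipow_zero, ipow_one', ipow_two', ipow_three']
    rw [if_neg (by decide)]; ring

lemma sum_ipow_dot {n : ℕ} (g : Fin n → ZMod 4) :
    ∑ u : Fin n → ZMod 4, ipow (dot4 u g) = 4 ^ n * alpha4 g := by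
  classical
  have h1 : ∑ u : Fin n → ZMod 4, ipow (dot4 u g)
      = ∑ u : Fin n → ZMod 4, ∏ i, ipow (u i * g i) :=
    Finset.sum_congr rfl fun u _ => ipow_sum _ _
  rw [h1, ← Fintype.prod_sum (fun i a => ipow (a * g i))]
  simp_rw [innerSumZ4]
  unfold alpha4
  by_cases hg : g = 0
  · subst hg; simp
  · rw [if_neg hg]
    obtain ⟨i, hi⟩ := Function.ne_iff.mp hg
    rw [Finset.prod_eq_zero (Finset.mem_univ i)]
    · simp
    · simpa using hi

lemma dot4_add {n : ℕ} (u g h : Fin n → ZMod 4) :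
    dot4 u (g + h) = dot4 u g + dot4 u h := by
  simp [dot4, mul_add, Finset.sum_add_distrib]

lemma dot4_neg {n : ℕ} (u g : Fin n → ZMod 4) :
    dot4 u (-g) = -dot4 u g := by
  simp [dot4, mul_neg]

lemma alpha4_neg {n : ℕ} (g : Fin n → ZMod 4) : alpha4 (-g) = alpha4 g := by
  simp [alpha4, neg_eq_zero]

lemma key3 {n : ℕ} (x y z : Fin n → ZMod 4) :
    ∑ u : Fin n → ZMod 4, ipow (dot4 u x) * ipow (dot4 u y) * ipow (dot4 u z)
      = 4 ^ n * alpha4 (x + y + z) := by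
  have h : ∀ u : Fin n → ZMod 4,
      ipow (dot4 u x) * ipow (dot4 u y) * ipow (dot4 u z) = ipow (dot4 u (x + y + z)) := by
    intro u; rw [dot4_add, dot4_add, ipow_add, ipow_add]
  simp_rw [h]; exact sum_ipow_dot _

lemma triple {n : ℕ} (a b c : Fin n → ZMod 4) :
    ∑ u : Fin n → ZMod 4,
      (ipow (dot4 u a) + ipow (-(dot4 u a))) * (ipow (dot4 u b) + ipow (-(dot4 u b)))
        * (ipow (dot4 u c) + ipow (-(dot4 u c)))
      = 2 ^ (2 * n + 1) * beta4 a b c := by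
  have hne : ∀ (u g : Fin n → ZMod 4), ipow (-(dot4 u g)) = ipow (dot4 u (-g)) := by
    intro u g; rw [dot4_neg]
  simp_rw [hne]
  simp only [add_mul, mul_add]
  simp only [Finset.sum_add_distrib]
  simp_rw [key3]
  have e1 : -a + b + c = -(a - b - c) := by ring
  have e2 : -a + b + -c = -(a - b + c) := by ring
  have e3 : -a + -b + c = -(a + b - c) := by ring
  have e4 : -a + -b + -c = -(a + b + c) := by ring
  have e5 : a + b + -c = a + b - c := by ring
  have e6 : a + -b + c = a - b + c := by ring
  have e7 : a + -b + -c = a - b - c := by ring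
  rw [e1, e2, e3, e4, e5, e6, e7, alpha4_neg, alpha4_neg, alpha4_neg, alpha4_neg]
  unfold beta4
  have h4 : (4:ℂ)^n = 2^(2*n) := by rw [pow_mul]; norm_num
  push_cast
  rw [h4]
  ring

/-- Equation (A.5): Σ_u σ̄_u³ = 2^{2n+1} Σ_{j,k,h} β_{jkh}. -/
theorem cube_sum_formula {n : ℕ} (Sb : Finset (Fin n → ZMod 4))
    (hΩ : ∀ g ∈ Sb, inOmega g) :
    ∑ u : Fin n → ZMod 4,
        (∑ g ∈ Sb, (ipow (dot4 u g) + ipow (-(dot4 u g)))) ^ 3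
      = 2 ^ (2 * n + 1) *
        ∑ gj ∈ Sb, ∑ gk ∈ Sb, ∑ gh ∈ Sb, (beta4 gj gk gh : ℂ) := by
  classical
  have step1 : ∀ u : Fin n → ZMod 4,
      (∑ g ∈ Sb, (ipow (dot4 u g) + ipow (-(dot4 u g)))) ^ 3
        = ∑ gj ∈ Sb, ∑ gk ∈ Sb, ∑ gh ∈ Sb,
            (ipow (dot4 u gj) + ipow (-(dot4 u gj)))
              * (ipow (dot4 u gk) + ipow (-(dot4 u gk)))
              * (ipow (dot4 u gh) + ipow (-(dot4 u gh))) := by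
    intro u
    rw [show ∀ x : ℂ, x ^ 3 = x * x * x from fun x => by ring]
    simp only [Finset.sum_mul, Finset.mul_sum]
    exact Finset.sum_congr rfl fun a _ => Finset.sum_congr rfl fun b _ =>
      Finset.sum_congr rfl fun c _ => by ring
  simp_rw [step1]
  rw [Finset.sum_comm]
  rw [Finset.mul_sum]
  refine Finset.sum_congr rfl fun gj _ => ?_
  rw [Finset.sum_comm, Finset.mul_sum]
  refine Finset.sum_congr rfl fun gk _ => ?_
  rw [Finset.sum_comm, Finset.mul_sum]
  refine Finset.sum_congr rfl fun gh _ => ?_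
  exact triple gj gk gh
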